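/- Let G be a finite graph and Γ a subcollection of the set of maximum independent sets of G such that Γ−{S} is an hke collection for each S ∈ Γ. Then the integer m satisfying |⋂Γ₁ − ⋃Γ₂| − |⋂Γ₂ − ⋃Γ₁| = (−1)^{|Γ₁|+1}·m for all partitions {Γ₁,Γ₂} of Γ into non-empty subcollections is non-negative. -/

import Mathlib

open Finset

/-- Union of a finite collection of finite sets. -/
def collU {α : Type*} [DecidableEq α] (Γ : Finset (Finset α)) : Finset α :=
  Γ.sup id

/-- Intersection of a finite collection of finite sets
(equals the usual intersection when the collection is non-empty). -/
def collI {α : Type*} [DecidableEq α] (Γ : Finset (Finset α)) : Finset α :=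
  (Γ.sup id).filter (fun x => ∀ S ∈ Γ, x ∈ S)

/-- `e Γ = |⋃Γ| + |⋂Γ|` as an integer. -/
def collE {α : Type*} [DecidableEq α] (Γ : Finset (Finset α)) : ℤ :=
  (collU Γ).card + (collI Γ).card

/-- `F` is a hereditary König–Egerváry collection with common cardinality `a`. -/
def IsHKE {α : Type*} [DecidableEq α] (F : Finset (Finset α)) (a : ℕ) : Prop :=
  (∀ S ∈ F, S.card = a) ∧
  ∀ Γ ⊆ F, Γ.Nonempty → collE Γ = 2 * (a : ℤ)

/-- A finite set of vertices is independent in `G`. -/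
def IsIndep {V : Type*} (G : SimpleGraph V) (S : Finset V) : Prop :=
  ∀ x ∈ S, ∀ y ∈ S, ¬ G.Adj x y

/-- A maximum independent set of `G`. -/
def IsMaxIndep {V : Type*} (G : SimpleGraph V) (S : Finset V) : Prop :=
  IsIndep G S ∧ ∀ T : Finset V, IsIndep G T → T.card ≤ S.card

/-- A finite set of edges of `G` which is a matching (pairwise non-incident edges). -/
def IsMatchingSet {V : Type*} (G : SimpleGraph V) (M : Finset (Sym2 V)) : Prop :=
  (∀ e ∈ M, e ∈ G.edgeSet) ∧
  ∀ e ∈ M, ∀ f ∈ M, e ≠ f → ∀ v : V, v ∈ e → v ∉ f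

section Aux
variable {α : Type*} [DecidableEq α]

lemma mem_collU {Γ : Finset (Finset α)} {x : α} :
    x ∈ collU Γ ↔ ∃ S ∈ Γ, x ∈ S := by
  simp [collU, mem_sup]

lemma mem_collI {Γ : Finset (Finset α)} (hΓ : Γ.Nonempty) {x : α} :
    x ∈ collI Γ ↔ ∀ S ∈ Γ, x ∈ S := by
  obtain ⟨S₀, h₀⟩ := hΓ
  simp only [collI, mem_filter, mem_sup, id_eq]
  exact ⟨fun h => h.2, fun h => ⟨⟨S₀, h₀, h S₀ h₀⟩, h⟩⟩

lemma collU_singleton (S : Finset α) : collU ({S} : Finset (Finset α)) = S := by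
  simp [collU]

lemma collI_singleton (S : Finset α) : collI ({S} : Finset (Finset α)) = S := by
  ext x
  rw [mem_collI (singleton_nonempty S)]
  simp

lemma collU_insert (S : Finset α) (A : Finset (Finset α)) :
    collU (insert S A) = S ∪ collU A := by
  simp [collU, sup_insert, sup_eq_union]

lemma collI_insert (S : Finset α) {A : Finset (Finset α)} (hA : A.Nonempty) :
    collI (insert S A) = S ∩ collI A := by
  ext x
  rw [mem_collI (insert_nonempty S A), mem_inter, mem_collI hA, forall_mem_insert]

lemma collE_key (S : Finset α) {A : Finset (Finset α)} (hA : A.Nonempty) :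
    ((S \ collU A).card : ℤ) - ((collI A \ S).card : ℤ)
      = collE (insert S A) - collE A := by
  have h1 : (S \ collU A).card + (S ∩ collU A).card = S.card :=
    card_sdiff_add_card_inter _ _
  have h2 : (collI A \ S).card + (collI A ∩ S).card = (collI A).card :=
    card_sdiff_add_card_inter _ _
  have h3 : (S ∪ collU A).card + (S ∩ collU A).card = S.card + (collU A).card :=
    card_union_add_card_inter _ _
  have h4 : S ∩ collI A = collI A ∩ S := inter_comm _ _
  simp only [collE, collU_insert, collI_insert S hA, h4]
  omega

lemma partL (a : ℕ) (B : Finset (Finset α)) :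
    ∀ A : Finset (Finset α), A.Nonempty → B.Nonempty → Disjoint A B →
      (∀ Γ' ⊆ A ∪ B, Γ'.Nonempty → collE Γ' = 2 * (a : ℤ)) →
      (collI A \ collU B).card = (collI B \ collU A).card := by
  induction B using Finset.strongInduction with
  | _ B ih =>
    intro A hA hB hdis hE
    obtain ⟨S, hS⟩ := hB
    obtain ⟨B₀, hSnB, rfl⟩ : ∃ B₀, S ∉ B₀ ∧ B = insert S B₀ :=
      ⟨B.erase S, notMem_erase _ _, (insert_erase hS).symm⟩
    have hSnA : S ∉ A := fun h => disjoint_left.mp hdis h hS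
    by_cases h0 : B₀.Nonempty
    · have hsub : B₀ ⊂ insert S B₀ := ssubset_insert hSnB
      have hdA : Disjoint A B₀ := hdis.mono_right (subset_insert _ _)
      have hdA' : Disjoint (insert S A) B₀ := by
        rw [disjoint_insert_left]
        exact ⟨hSnB, hdA⟩
      have hu1 : A ∪ B₀ ⊆ A ∪ insert S B₀ := union_subset_union_right (subset_insert _ _)
      have hu2 : insert S A ∪ B₀ ⊆ A ∪ insert S B₀ := by
        rw [insert_union]
        exact insert_subset (mem_union_right _ hS) hu1
      have h1 := ih B₀ hsub A hA h0 hdA (fun Γ' h hn => hE Γ' (h.trans hu1) hn)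
      have h2 := ih B₀ hsub (insert S A) (insert_nonempty _ _) h0 hdA'
        (fun Γ' h hn => hE Γ' (h.trans hu2) hn)
      have e1 : collI A \ collU (insert S B₀) = (collI A \ collU B₀) \ S := by
        rw [collU_insert]
        ext x; simp only [mem_sdiff, mem_union]; tauto
      have e2 : collI (insert S B₀) \ collU A = (collI B₀ \ collU A) ∩ S := by
        rw [collI_insert S h0]
        ext x; simp only [mem_sdiff, mem_inter]; tauto
      have e3 : collI (insert S A) \ collU B₀
          = (collI A \ collU B₀) ∩ S := by
        rw [collI_insert S hA]
        ext x; simp only [mem_sdiff, mem_inter]; tauto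
      have e4 : collI B₀ \ collU (insert S A)
          = (collI B₀ \ collU A) \ S := by
        rw [collU_insert]
        ext x; simp only [mem_sdiff, mem_union]; tauto
      rw [e3, e4] at h2
      rw [e1, e2]
      have cX : ((collI A \ collU B₀) \ S).card
          + ((collI A \ collU B₀) ∩ S).card
          = (collI A \ collU B₀).card := card_sdiff_add_card_inter _ _
      have cY : ((collI B₀ \ collU A) \ S).card
          + ((collI B₀ \ collU A) ∩ S).card
          = (collI B₀ \ collU A).card := card_sdiff_add_card_inter _ _
      omega
    · rw [not_nonempty_iff_eq_empty] at h0
      subst h0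
      rw [show insert S (∅ : Finset (Finset α)) = {S} from rfl,
        collU_singleton, collI_singleton]
      have hEA : collE A = 2 * (a : ℤ) := hE A subset_union_left hA
      have hEi : collE (insert S A) = 2 * (a : ℤ) := by
        refine hE _ ?_ (insert_nonempty _ _)
        exact insert_subset (mem_union_right _ (mem_singleton_self S)) subset_union_left
      have hk := collE_key S hA
      rw [hEA, hEi] at hk
      omega

end Aux

theorem stmt_10 {V : Type*} [Fintype V] [DecidableEq V] (G : SimpleGraph V)
    (Γ : Finset (Finset V)) (hcard : 2 ≤ Γ.card) (a : ℕ) (ha : 0 < a)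
    (hΩ : ∀ S ∈ Γ, IsMaxIndep G S)
    (hhke : ∀ S ∈ Γ, IsHKE (Γ.erase S) a) :
    ∃ m : ℤ, 0 ≤ m ∧ ∀ Γ₁ Γ₂ : Finset (Finset V),
      Γ₁ ∪ Γ₂ = Γ → Disjoint Γ₁ Γ₂ → Γ₁.Nonempty → Γ₂.Nonempty →
      ((collI Γ₁ \ collU Γ₂).card : ℤ) - ((collI Γ₂ \ collU Γ₁).card : ℤ)
        = (-1) ^ (Γ₁.card + 1) * m := by
  -- every member of Γ has cardinality a
  have allcard : ∀ S ∈ Γ, S.card = a := by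
    intro S hS
    obtain ⟨T, hT, hTS⟩ := Finset.exists_mem_ne (s := Γ) (by omega) S
    exact (hhke T hT).1 S (mem_erase.mpr ⟨fun h => hTS h.symm, hS⟩)
  set E : ℤ := collE Γ with hE
  -- base computation: for any S ∈ Γ the singleton partition difference is E - 2a
  have base : ∀ S ∈ Γ, ((S \ collU (Γ.erase S)).card : ℤ)
      - ((collI (Γ.erase S) \ S).card : ℤ) = E - 2 * (a : ℤ) := by
    intro S hS
    have hne : (Γ.erase S).Nonempty := by
      rw [← card_pos, card_erase_of_mem hS]; omega
    have h := collE_key S hne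
    rw [insert_erase hS] at h
    rw [h, (hhke S hS).2 (Γ.erase S) subset_rfl hne]
  -- the general alternating identity
  have main : ∀ Γ₁ : Finset (Finset V), ∀ Γ₂, Γ₁ ∪ Γ₂ = Γ → Disjoint Γ₁ Γ₂ →
      Γ₁.Nonempty → Γ₂.Nonempty →
      ((collI Γ₁ \ collU Γ₂).card : ℤ) - ((collI Γ₂ \ collU Γ₁).card : ℤ)
        = (-1) ^ (Γ₁.card + 1) * (E - 2 * (a : ℤ)) := by
    intro Γ₁
    induction Γ₁ using Finset.strongInduction with
    | _ Γ₁ ih =>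
      intro Γ₂ hUn hdis h1 h2
      obtain ⟨S, hS⟩ := h1
      have hSΓ : S ∈ Γ := hUn ▸ mem_union_left _ hS
      have hSn2 : S ∉ Γ₂ := disjoint_left.mp hdis hS
      obtain ⟨A, hSnA, rfl⟩ : ∃ A, S ∉ A ∧ Γ₁ = insert S A :=
        ⟨Γ₁.erase S, notMem_erase _ _, (insert_erase hS).symm⟩
      by_cases h0 : A.Nonempty
      · have hcard1 : (insert S A).card = A.card + 1 := card_insert_of_notMem hSnA
        have hAsub : A ⊂ insert S A := ssubset_insert hSnA
        have hAB : A ∪ Γ₂ = Γ.erase S := by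
          ext T
          simp only [mem_union, mem_erase]
          constructor
          · rintro (hT | hT)
            · exact ⟨fun h => hSnA (h ▸ hT), hUn ▸ mem_union_left _ (mem_insert_of_mem hT)⟩
            · exact ⟨fun h => hSn2 (h ▸ hT), hUn ▸ mem_union_right _ hT⟩
          · rintro ⟨hTS, hT⟩
            rw [← hUn] at hT
            rcases mem_union.mp hT with h | h
            · rcases mem_insert.mp h with h' | h'
              · exact absurd h' hTS
              · exact Or.inl h'
            · exact Or.inr h
        have hdisA : Disjoint A Γ₂ := hdis.mono_left (subset_insert _ _)
        have hL := partL a Γ₂ A h0 h2 hdisA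
          (fun Γ' hsub hn => (hhke S hSΓ).2 Γ' (hAB ▸ hsub) hn)
        have hdis' : Disjoint A (insert S Γ₂) := by
          rw [disjoint_insert_right]
          exact ⟨hSnA, hdisA⟩
        have hUn' : A ∪ insert S Γ₂ = Γ := by
          rw [union_insert, ← insert_union, hUn]
        have hrec := ih A hAsub (insert S Γ₂) hUn' hdis' h0 (insert_nonempty _ _)
        have e1 : collI (insert S A) \ collU Γ₂ = (collI A \ collU Γ₂) ∩ S := by
          rw [collI_insert S h0]
          ext x; simp only [mem_sdiff, mem_inter]; tauto
        have e2 : collI Γ₂ \ collU (insert S A) = (collI Γ₂ \ collU A) \ S := by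
          rw [collU_insert]
          ext x; simp only [mem_sdiff, mem_union]; tauto
        have e3 : collI A \ collU (insert S Γ₂)
            = (collI A \ collU Γ₂) \ S := by
          rw [collU_insert]
          ext x; simp only [mem_sdiff, mem_union]; tauto
        have e4 : collI (insert S Γ₂) \ collU A
            = (collI Γ₂ \ collU A) ∩ S := by
          rw [collI_insert S h2]
          ext x; simp only [mem_sdiff, mem_inter]; tauto
        rw [e3, e4] at hrec
        rw [e1, e2]
        have cX : ((collI A \ collU Γ₂) \ S).card
            + ((collI A \ collU Γ₂) ∩ S).card
            = (collI A \ collU Γ₂).card := card_sdiff_add_card_inter _ _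
        have cY : ((collI Γ₂ \ collU A) \ S).card
            + ((collI Γ₂ \ collU A) ∩ S).card
            = (collI Γ₂ \ collU A).card := card_sdiff_add_card_inter _ _
        have hpow : ((-1 : ℤ)) ^ ((insert S A).card + 1)
            = -(-1 : ℤ) ^ (A.card + 1) := by
          rw [hcard1]; ring
        have cX' : (((collI A \ collU Γ₂) \ S).card : ℤ)
            + (((collI A \ collU Γ₂) ∩ S).card : ℤ)
            = ((collI A \ collU Γ₂).card : ℤ) := by exact_mod_cast cX
        have cY' : (((collI Γ₂ \ collU A) \ S).card : ℤ)
            + (((collI Γ₂ \ collU A) ∩ S).card : ℤ)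
            = ((collI Γ₂ \ collU A).card : ℤ) := by exact_mod_cast cY
        have hL' : ((collI A \ collU Γ₂).card : ℤ)
            = ((collI Γ₂ \ collU A).card : ℤ) := by exact_mod_cast hL
        rw [hpow]
        linarith [hrec, cX', cY', hL']
      · rw [not_nonempty_iff_eq_empty] at h0
        subst h0
        have hΓ2 : Γ₂ = Γ.erase S := by
          ext T
          simp only [mem_erase]
          constructor
          · intro hT
            exact ⟨fun h => hSn2 (h ▸ hT), hUn ▸ mem_union_right _ hT⟩
          · rintro ⟨hTS, hT⟩
            rw [← hUn] at hT
            rcases mem_union.mp hT with h | h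
            · rcases mem_insert.mp h with h' | h'
              · exact absurd h' hTS
              · exact absurd h' (notMem_empty T)
            · exact h
        subst hΓ2
        rw [show insert S (∅ : Finset (Finset V)) = {S} from rfl,
          collI_singleton, collU_singleton, card_singleton]
        norm_num
        exact base S hSΓ
  -- nonnegativity of m = E - 2a via the swap argument
  have hΓne : Γ.Nonempty := card_pos.mp (by omega)
  obtain ⟨S, hS⟩ := hΓne
  have hΓ2ne : (Γ.erase S).Nonempty := by
    rw [← card_pos, card_erase_of_mem hS]; omega
  have hmnn : 0 ≤ E - 2 * (a : ℤ) := by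
    set Γ₂ := Γ.erase S with hΓ₂def
    set T : Finset V := (S ∩ collU Γ₂) ∪ (collI Γ₂ \ S) with hTdef
    have hTind : IsIndep G T := by
      intro x hx y hy
      have hxy : ∃ W, IsIndep G W ∧ x ∈ W ∧ y ∈ W := by
        rcases mem_union.mp hx with hx' | hx' <;> rcases mem_union.mp hy with hy' | hy'
        · exact ⟨S, (hΩ S hS).1, (mem_inter.mp hx').1, (mem_inter.mp hy').1⟩
        · obtain ⟨W, hW, hxW⟩ := mem_collU.mp (mem_inter.mp hx').2
          refine ⟨W, (hΩ W (mem_of_mem_erase hW)).1, hxW, ?_⟩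
          exact (mem_collI hΓ2ne).mp (mem_sdiff.mp hy').1 W hW
        · obtain ⟨W, hW, hyW⟩ := mem_collU.mp (mem_inter.mp hy').2
          refine ⟨W, (hΩ W (mem_of_mem_erase hW)).1, ?_, hyW⟩
          exact (mem_collI hΓ2ne).mp (mem_sdiff.mp hx').1 W hW
        · obtain ⟨W, hW⟩ := id hΓ2ne
          refine ⟨W, (hΩ W (mem_of_mem_erase hW)).1, ?_, ?_⟩
          · exact (mem_collI hΓ2ne).mp (mem_sdiff.mp hx').1 W hW
          · exact (mem_collI hΓ2ne).mp (mem_sdiff.mp hy').1 W hW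
      obtain ⟨W, hWind, hxW, hyW⟩ := hxy
      exact hWind x hxW y hyW
    have hTle : T.card ≤ S.card := (hΩ S hS).2 T hTind
    have hTsplit : T.card = (S ∩ collU Γ₂).card + (collI Γ₂ \ S).card := by
      rw [hTdef]
      apply card_union_of_disjoint
      rw [disjoint_left]
      intro x hx hx'
      exact (mem_sdiff.mp hx').2 (mem_inter.mp hx).1
    have hSsplit : (S ∩ collU Γ₂).card + (S \ collU Γ₂).card = S.card :=
      card_inter_add_card_sdiff _ _
    have hSa : S.card = a := allcard S hS
    have hbase := base S hS
    rw [← hΓ₂def] at hbase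
    omega
  refine ⟨E - 2 * (a : ℤ), hmnn, fun Γ₁ Γ₂ h1 h2 h3 h4 => main Γ₁ Γ₂ h1 h2 h3 h4⟩
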